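/- Let m_1, m_2 be positive integers with m_2 dividing m_1, and let F_1, …, F_{m_1} ∈ ℚ[x]. Define S : ℤ² → ℂ by S(k_1, k_2) = ∑_{i=1}^{m_1} ω_{m_1}^{i·k_1} · F_i(ω_{m_2}^{k_2}), where ω_k = e^{2πi/k}. Assume S(k_1, k_2) ∈ ℚ for all k_1, k_2 ∈ ℤ. Then: (1) S(k_1, k_2) is periodic in k_1 with period m_1 and in k_2 with period m_2; (2) for every λ ∈ ℤ with gcd(λ, m_1) = 1, S(k_1, k_2) = S(λk_1, λk_2) for all k_1, k_2 ∈ ℤ; (3) for all k_1, k_2 ∈ ℤ and every d ∈ ℤ with gcd(d, m_1) = 1 and d · (k_1/gcd(k_1, m_1)) ≡ 1 (mod m_1/gcd(k_1, m_1)), one has S(k_1, k_2) = S(gcd(k_1, m_1), d·k_2). -/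

import Mathlib

open Finset Polynomial

theorem rootOfUnity_sum_symmetries (m1 m2 : ℕ) (hm1 : 0 < m1) (hm2 : 0 < m2)
    (hdvd : m2 ∣ m1) (Fp : Fin m1 → Polynomial ℚ) (S : ℤ → ℤ → ℂ)
    (hS : ∀ k1 k2 : ℤ, S k1 k2 =
      ∑ i : Fin m1,
        Complex.exp (2 * Real.pi * Complex.I / m1) ^ (((i : ℕ) + 1 : ℤ) * k1) *
          Polynomial.aeval (Complex.exp (2 * Real.pi * Complex.I / m2) ^ k2) (Fp i))
    (hrat : ∀ k1 k2 : ℤ, ∃ s : ℚ, S k1 k2 = (s : ℂ)) :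
    (∀ k1 k2 : ℤ, S (k1 + m1) k2 = S k1 k2 ∧ S k1 (k2 + m2) = S k1 k2)
    ∧ (∀ lam : ℤ, Int.gcd lam m1 = 1 → ∀ k1 k2 : ℤ, S k1 k2 = S (lam * k1) (lam * k2))
    ∧ (∀ k1 k2 d : ℤ, Int.gcd d m1 = 1 →
        Int.ModEq ((m1 : ℤ) / (Int.gcd k1 m1 : ℤ)) (d * (k1 / (Int.gcd k1 m1 : ℤ))) 1 →
        S k1 k2 = S ((Int.gcd k1 m1 : ℕ) : ℤ) (d * k2)) := by
  obtain ⟨c, hc⟩ := hdvd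
  have hm1' : (m1 : ℤ) ≠ 0 := by exact_mod_cast hm1.ne'
  have hc0 : 0 < c := by
    rcases Nat.eq_zero_or_pos c with h | h
    · simp [h] at hc; omega
    · exact h
  set ω : ℂ := Complex.exp (2 * Real.pi * Complex.I / m1) with hωdef
  have hω : IsPrimitiveRoot ω m1 := Complex.isPrimitiveRoot_exp m1 hm1.ne'
  have hω0 : ω ≠ 0 := Complex.exp_ne_zero _
  have hωm : ω ^ (m1 : ℤ) = 1 := by rw [zpow_natCast]; exact hω.pow_eq_one
  have hA : ∀ a b : ℤ, (m1:ℤ) ∣ (a - b) → ω ^ a = ω ^ b := by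
    rintro a b ⟨t, ht⟩
    have : a = b + (m1:ℤ) * t := by linarith
    rw [this, zpow_add₀ hω0, zpow_mul, hωm, one_zpow, mul_one]
  have hmodself : ∀ a : ℤ, (m1:ℤ) ∣ (a % (m1:ℤ) - a) :=
    fun a => ⟨-(a / m1), by rw [Int.emod_def]; ring⟩
  -- ω₂ = ω ^ c
  have hω2 : Complex.exp (2 * Real.pi * Complex.I / m2) = ω ^ (c : ℕ) := by
    rw [hωdef, ← Complex.exp_nat_mul]
    congr 1
    have hm2' : (m2 : ℂ) ≠ 0 := by exact_mod_cast hm2.ne'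
    have hm1c : (m1 : ℂ) ≠ 0 := by exact_mod_cast hm1.ne'
    have hcc : (m1 : ℂ) = (m2 : ℂ) * c := by exact_mod_cast congrArg (Nat.cast : ℕ → ℂ) hc
    field_simp
    rw [hcc]
  have hS' : ∀ k1 k2 : ℤ, S k1 k2 =
      ∑ i : Fin m1, ω ^ (((i:ℕ) + 1 : ℤ) * k1) * Polynomial.aeval (ω ^ ((c:ℤ) * k2)) (Fp i) := by
    intro k1 k2
    rw [hS]
    refine Finset.sum_congr rfl fun i _ => ?_
    rw [hω2, ← zpow_natCast ω c, ← zpow_mul]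
  -- mod invariance
  have hmod : ∀ a a' b b' : ℤ, (m1:ℤ) ∣ (a - a') → (m2:ℤ) ∣ (b - b') → S a b = S a' b' := by
    intro a a' b b' h1 h2
    rw [hS', hS']
    refine Finset.sum_congr rfl fun i _ => ?_
    congr 1
    · exact hA _ _ (by have := h1.mul_left (((i:ℕ) + 1 : ℤ)); convert this using 1; rfl; ring)
    · refine congrArg (fun z => Polynomial.aeval z (Fp i)) (hA _ _ ?_)
      obtain ⟨t, ht⟩ := h2
      exact ⟨t, by rw [hc]; push_cast; rw [show (c:ℤ) * b - (c:ℤ) * b' = (c:ℤ) * (b - b') by ring, ht]; ring⟩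
  -- Galois-type invariance for natural exponents coprime to m1
  have hgal : ∀ n : ℕ, Nat.Coprime n m1 → ∀ k1 k2 : ℤ, S k1 k2 = S ((n:ℤ) * k1) ((n:ℤ) * k2) := by
    intro n hn k1 k2
    obtain ⟨q, hq⟩ := hrat k1 k2
    set e : Fin m1 → ℕ := fun i => ((((i:ℕ) + 1 : ℤ) * k1) % (m1:ℤ)).toNat with hedef
    set f : ℕ := (((c:ℤ) * k2) % (m1:ℤ)).toNat with hfdef
    have he : ∀ i, ((e i : ℤ)) = (((i:ℕ) + 1 : ℤ) * k1) % (m1:ℤ) :=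
      fun i => Int.toNat_of_nonneg (Int.emod_nonneg _ hm1')
    have hf : ((f : ℤ)) = ((c:ℤ) * k2) % (m1:ℤ) :=
      Int.toNat_of_nonneg (Int.emod_nonneg _ hm1')
    set P : Polynomial ℚ :=
      (∑ i : Fin m1, (X : Polynomial ℚ) ^ (e i) * ((Fp i).comp (X ^ f))) - C q with hPdef
    have haevalP : ∀ u : ℂ, Polynomial.aeval u P =
        (∑ i : Fin m1, u ^ (e i) * Polynomial.aeval (u ^ f) (Fp i)) - (q : ℂ) := by
      intro u
      simp [hPdef, aeval_comp, eq_ratCast]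
    have hPω : Polynomial.aeval ω P = 0 := by
      rw [haevalP]
      have : (∑ i : Fin m1, ω ^ (e i) * Polynomial.aeval (ω ^ f) (Fp i)) = S k1 k2 := by
        rw [hS']
        refine Finset.sum_congr rfl fun i _ => ?_
        rw [← zpow_natCast ω (e i), ← zpow_natCast ω f, he i, hf,
          hA _ _ (hmodself _), hA _ _ (hmodself _)]
      rw [this, hq, sub_self]
    have hcyc : cyclotomic m1 ℚ = minpoly ℚ ω := cyclotomic_eq_minpoly_rat hω hm1
    have hdvdP : cyclotomic m1 ℚ ∣ P := hcyc ▸ minpoly.dvd ℚ ω hPω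
    set u : ℂ := ω ^ n with hudef
    have hu : IsPrimitiveRoot u m1 := hω.pow_of_coprime n hn
    have hu0 : Polynomial.aeval u (cyclotomic m1 ℚ) = 0 := by
      have h1 := hu.isRoot_cyclotomic hm1
      rw [Polynomial.aeval_def, ← Polynomial.eval_map, Polynomial.map_cyclotomic]
      exact h1
    have hPu : Polynomial.aeval u P = 0 := by
      obtain ⟨Q, hQ⟩ := hdvdP
      rw [hQ, map_mul, hu0, zero_mul]
    have hsum : (∑ i : Fin m1, u ^ (e i) * Polynomial.aeval (u ^ f) (Fp i))
        = S ((n:ℤ) * k1) ((n:ℤ) * k2) := by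
      rw [hS']
      refine Finset.sum_congr rfl fun i _ => ?_
      have h1 : u ^ (e i) = ω ^ (((i:ℕ) + 1 : ℤ) * ((n:ℤ) * k1)) := by
        rw [hudef, ← pow_mul, ← zpow_natCast ω (n * e i)]
        refine hA _ _ ?_
        have hd := (hmodself ((((i:ℕ) + 1 : ℤ) * k1))).mul_left (n:ℤ)
        rw [← he i] at hd
        convert hd using 1
        rfl
        push_cast
        ring
      have h2 : u ^ f = ω ^ ((c:ℤ) * ((n:ℤ) * k2)) := by
        rw [hudef, ← pow_mul, ← zpow_natCast ω (n * f)]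
        refine hA _ _ ?_
        have hd := (hmodself ((c:ℤ) * k2)).mul_left (n:ℤ)
        rw [← hf] at hd
        convert hd using 1
        rfl
        push_cast
        ring
      rw [h1, h2]
    rw [hq, ← sub_eq_zero, ← hsum]
    rw [haevalP] at hPu
    linear_combination -hPu
  -- part 2 as a standalone fact
  have key2 : ∀ lam : ℤ, Int.gcd lam m1 = 1 → ∀ k1 k2 : ℤ, S k1 k2 = S (lam * k1) (lam * k2) := by
    intro lam hlam k1 k2
    set n : ℕ := (lam % (m1:ℤ)).toNat with hndef
    have hn' : ((n:ℤ)) = lam % (m1:ℤ) := Int.toNat_of_nonneg (Int.emod_nonneg _ hm1')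
    have hnlam : (m1:ℤ) ∣ ((n:ℤ) - lam) := by rw [hn']; exact hmodself lam
    have hn : Nat.Coprime n m1 := by
      have hcop : IsCoprime lam (m1:ℤ) := Int.isCoprime_iff_gcd_eq_one.mpr hlam
      obtain ⟨t, ht⟩ := hnlam
      have hne : (n:ℤ) = lam + (m1:ℤ) * t := by linarith
      have hcop2 : IsCoprime ((n:ℤ)) ((m1:ℤ)) := by
        rw [hne]; exact hcop.add_mul_left_left t
      have := Int.isCoprime_iff_gcd_eq_one.mp hcop2
      unfold Nat.Coprime
      rw [← Int.gcd_natCast_natCast]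
      omega
    have h1 := hgal n hn k1 k2
    rw [h1]
    refine hmod _ _ _ _ ?_ ?_
    · exact (by obtain ⟨t, ht⟩ := hnlam; exact ⟨t * k1, by rw [show (n:ℤ)*k1 - lam*k1 = ((n:ℤ) - lam)*k1 by ring, ht]; ring⟩)
    · obtain ⟨t, ht⟩ := hnlam
      exact ⟨(c:ℤ) * t * k2, by rw [show (n:ℤ)*k2 - lam*k2 = ((n:ℤ) - lam)*k2 by ring, ht, hc]; push_cast; ring⟩
  refine ⟨?_, key2, ?_⟩
  · intro k1 k2
    constructor
    · exact hmod _ _ _ _ ⟨1, by ring⟩ ⟨0, by ring⟩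
    · exact hmod _ _ _ _ ⟨0, by ring⟩ ⟨1, by ring⟩
  · intro k1 k2 d hd hcongr
    set g : ℤ := (Int.gcd k1 m1 : ℤ) with hgdef
    have hg1 : g ∣ k1 := Int.gcd_dvd_left _ _
    have hg2 : g ∣ (m1:ℤ) := Int.gcd_dvd_right _ _
    have step1 := key2 d hd k1 k2
    rw [step1]
    refine hmod _ _ _ _ ?_ ⟨0, by ring⟩
    -- m1 ∣ d*k1 - g
    have hdd : ((m1:ℤ) / g) ∣ (d * (k1 / g) - 1) := Int.ModEq.dvd hcongr.symm
    obtain ⟨t, ht⟩ := hdd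
    refine ⟨t, ?_⟩
    have h3 : g * ((m1:ℤ) / g) = m1 := Int.mul_ediv_cancel' hg2
    have h4 : g * (k1 / g) = k1 := Int.mul_ediv_cancel' hg1
    calc d * k1 - g = g * (d * (k1/g) - 1) := by rw [mul_sub, mul_one]; rw [show g * (d * (k1/g)) = d * (g * (k1/g)) by ring, h4]
      _ = g * ((m1:ℤ)/g * t) := by rw [ht]
      _ = (m1:ℤ) * t := by rw [← mul_assoc, h3]
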